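/- Let (r_α)_{α>0} be a generator of a regularisation method and suppose ‖x_α(y) − x†‖ > 0 for all α > 0. Then the function A : (0,∞) → (0,∞) defined by A(α) = α·‖x_α(y) − x†‖² is continuous and strictly increasing, with A(α) → 0 as α → 0 and A(α) → ∞ as α → ∞; consequently, for every δ > 0 there exists a unique α_δ > 0 satisfying α_δ·‖x_{α_δ}(y) − x†‖² = δ². -/

import Mathlib

open MeasureTheory RealInnerProductSpace Filter

theorem statement7
    {X : Type*} [NormedAddCommGroup X] [InnerProductSpace ℝ X] [CompleteSpace X]
    {Y : Type*} [NormedAddCommGroup Y] [InnerProductSpace ℝ Y] [CompleteSpace Y]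
    (L : X →L[ℝ] Y) (y : Y) (xdag : X)
    (hsol : L xdag = y) (hmin : ∀ x : X, L x = y → ‖xdag‖ ≤ ‖x‖)
    (r : ℝ → ℝ → ℝ) (ρ ρt : ℝ) (hρ0 : 0 < ρ) (hρ1 : ρ < 1) (hρt0 : 0 < ρt) (hρt1 : ρt < 1)
    (hrcont : ∀ α > (0:ℝ), ContinuousOn (r α) (Set.Ici 0))
    (hrnonneg : ∀ α > (0:ℝ), ∀ t ∈ Set.Ici (0:ℝ), 0 ≤ r α t)
    (hrbound : ∀ α > (0:ℝ), ∀ t > (0:ℝ), r α t ≤ min (1 / t) (ρ / Real.sqrt (α * t)))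
    (hrt_anti : ∀ α > (0:ℝ), AntitoneOn (fun t => (1 - t * r α t) ^ 2) (Set.Ici 0))
    (hrt_cont : ∀ t ∈ Set.Ici (0:ℝ), ContinuousOn (fun α => (1 - t * r α t) ^ 2) (Set.Ioi 0))
    (hrt_mono : ∀ t ∈ Set.Ici (0:ℝ), MonotoneOn (fun α => (1 - t * r α t) ^ 2) (Set.Ioi 0))
    (hrt_lt : ∀ α > (0:ℝ), (1 - α * r α α) ^ 2 < ρt)
    (e : StieltjesFunction ℝ) (he0 : e 0 = 0)
    (he_const : ∀ t : ℝ, ‖L‖ ^ 2 ≤ t → e t = e (‖L‖ ^ 2))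
    (xa : ℝ → X)
    (hint : ∀ α > (0:ℝ),
      ‖xa α - xdag‖ ^ 2 = ∫ t in Set.Ioc (0:ℝ) (‖L‖ ^ 2), (1 - t * r α t) ^ 2 ∂e.measure)
    (hpos : ∀ α > (0:ℝ), 0 < ‖xa α - xdag‖) :
    ContinuousOn (fun a => a * ‖xa a - xdag‖ ^ 2) (Set.Ioi 0)
    ∧ StrictMonoOn (fun a => a * ‖xa a - xdag‖ ^ 2) (Set.Ioi 0)
    ∧ Tendsto (fun a => a * ‖xa a - xdag‖ ^ 2) (nhdsWithin 0 (Set.Ioi 0)) (nhds 0)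
    ∧ Tendsto (fun a => a * ‖xa a - xdag‖ ^ 2) atTop atTop
    ∧ ∀ δ > (0:ℝ), ∃! a : ℝ, 0 < a ∧ a * ‖xa a - xdag‖ ^ 2 = δ ^ 2 := by
  set B : ℝ := ‖L‖ ^ 2 with hBdef
  have hB : 0 ≤ B := by positivity
  set μ : Measure ℝ := e.measure.restrict (Set.Ioc (0:ℝ) B) with hμdef
  have hμfin : μ Set.univ < ⊤ := by
    rw [hμdef, Measure.restrict_apply_univ, e.measure_Ioc]
    exact ENNReal.ofReal_lt_top
  haveI : IsFiniteMeasure μ := ⟨hμfin⟩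
  set C : ℝ := (μ Set.univ).toReal with hCdef
  have hC0 : 0 ≤ C := ENNReal.toReal_nonneg
  set F : ℝ → ℝ := fun a => ∫ t, (1 - t * r a t) ^ 2 ∂μ with hFdef
  have hFeq : ∀ a > (0:ℝ), ‖xa a - xdag‖ ^ 2 = F a := hint
  -- pointwise bounds on the integrand
  have hpt : ∀ a > (0:ℝ), ∀ t ∈ Set.Ioc (0:ℝ) B,
      0 ≤ 1 - t * r a t ∧ t * r a t ≥ 0 ∧ (1 - t * r a t) ^ 2 ≤ 1 := by
    intro a ha t ht
    have ht0 : 0 < t := ht.1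
    have h1 : r a t ≤ 1 / t := (hrbound a ha t ht0).trans (min_le_left _ _)
    have h2 : 0 ≤ r a t := hrnonneg a ha t ht0.le
    have h3 : t * r a t ≤ 1 := by
      calc t * r a t ≤ t * (1 / t) := by nlinarith
      _ = 1 := by field_simp
    have h4 : 0 ≤ t * r a t := by positivity
    refine ⟨by linarith, h4, ?_⟩
    nlinarith
  have hmeas : ∀ a > (0:ℝ), AEStronglyMeasurable (fun t => (1 - t * r a t) ^ 2) μ := by
    intro a ha
    have hc : ContinuousOn (fun t => (1 - t * r a t) ^ 2) (Set.Ioc (0:ℝ) B) :=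
      ((continuousOn_const.sub (continuousOn_id.mul (hrcont a ha))).pow 2).mono
        (fun t ht => ht.1.le)
    exact hc.aestronglyMeasurable measurableSet_Ioc
  have hInt : ∀ a > (0:ℝ), Integrable (fun t => (1 - t * r a t) ^ 2) μ := by
    intro a ha
    refine (integrable_const (1:ℝ)).mono' (hmeas a ha) ?_
    refine (ae_restrict_mem measurableSet_Ioc).mono fun t ht => ?_
    obtain ⟨h1, h2, h3⟩ := hpt a ha t ht
    rw [Real.norm_eq_abs, abs_of_nonneg (sq_nonneg _)]
    exact h3
  have hFle : ∀ a > (0:ℝ), F a ≤ C := by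
    intro a ha
    calc F a ≤ ∫ _, (1:ℝ) ∂μ := by
          refine integral_mono_ae (hInt a ha) (integrable_const 1) ?_
          exact (ae_restrict_mem measurableSet_Ioc).mono fun t ht => (hpt a ha t ht).2.2
    _ = C := by simp [hCdef, measureReal_def]
  have hFpos : ∀ a > (0:ℝ), 0 < F a := by
    intro a ha
    rw [← hFeq a ha]
    exact pow_pos (hpos a ha) 2
  have hC : 0 < C := lt_of_lt_of_le (hFpos 1 one_pos) (hFle 1 one_pos)
  have hFmono : ∀ a > (0:ℝ), ∀ b > (0:ℝ), a ≤ b → F a ≤ F b := by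
    intro a ha b hb hab
    refine integral_mono_ae (hInt a ha) (hInt b hb) ?_
    exact (ae_restrict_mem measurableSet_Ioc).mono fun t ht =>
      hrt_mono t ht.1.le (Set.mem_Ioi.2 ha) (Set.mem_Ioi.2 hb) hab
  have hFcont : ∀ a₀ ∈ Set.Ioi (0:ℝ), ContinuousAt F a₀ := by
    intro a₀ ha₀
    have hev : ∀ᶠ a in nhds a₀, a ∈ Set.Ioi (0:ℝ) := isOpen_Ioi.eventually_mem ha₀
    refine continuousAt_of_dominated (bound := fun _ => (1:ℝ))
      (hev.mono fun a ha => hmeas a ha) (hev.mono fun a ha => ?_) (integrable_const 1) ?_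
    · refine (ae_restrict_mem measurableSet_Ioc).mono fun t ht => ?_
      obtain ⟨h1, h2, h3⟩ := hpt a ha t ht
      rw [Real.norm_eq_abs, abs_of_nonneg (sq_nonneg _)]
      exact h3
    · refine (ae_restrict_mem measurableSet_Ioc).mono fun t ht => ?_
      exact (hrt_cont t ht.1.le).continuousAt (isOpen_Ioi.mem_nhds ha₀)
  -- the four main claims
  have hcont : ContinuousOn (fun a => a * ‖xa a - xdag‖ ^ 2) (Set.Ioi 0) := by
    have h1 : ContinuousOn (fun a => a * F a) (Set.Ioi 0) := fun a ha =>
      (continuousAt_id.mul (hFcont a ha)).continuousWithinAt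
    exact h1.congr fun a ha => by rw [hFeq a ha]
  have hmono : StrictMonoOn (fun a => a * ‖xa a - xdag‖ ^ 2) (Set.Ioi 0) := by
    intro a ha b hb hab
    simp only [hFeq a ha, hFeq b hb]
    calc a * F a < b * F a := mul_lt_mul_of_pos_right hab (hFpos a ha)
    _ ≤ b * F b := mul_le_mul_of_nonneg_left (hFmono a ha b hb hab.le) (le_of_lt hb)
  have h3 : Tendsto (fun a => a * ‖xa a - xdag‖ ^ 2) (nhdsWithin 0 (Set.Ioi 0)) (nhds 0) := by
    have hub : ∀ᶠ a in nhdsWithin 0 (Set.Ioi (0:ℝ)), a * ‖xa a - xdag‖ ^ 2 ≤ a * C := by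
      filter_upwards [self_mem_nhdsWithin] with a ha
      rw [hFeq a ha]
      exact mul_le_mul_of_nonneg_left (hFle a ha) (le_of_lt ha)
    have hlb : ∀ᶠ a in nhdsWithin 0 (Set.Ioi (0:ℝ)), (0:ℝ) ≤ a * ‖xa a - xdag‖ ^ 2 := by
      filter_upwards [self_mem_nhdsWithin] with a ha
      have : (0:ℝ) < a := ha
      positivity
    have hC' : Tendsto (fun a : ℝ => a * C) (nhdsWithin 0 (Set.Ioi (0:ℝ))) (nhds 0) := by
      have : Tendsto (fun a : ℝ => a * C) (nhds 0) (nhds 0) := by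
        have := (continuous_id.mul (continuous_const (y := C))).tendsto 0
        simpa [Pi.mul_def] using this
      exact this.mono_left nhdsWithin_le_nhds
    exact tendsto_of_tendsto_of_tendsto_of_le_of_le' tendsto_const_nhds hC' hlb hub
  have hFlow : ∀ a : ℝ, max B 1 ≤ a → (1 - ρ) ^ 2 * C ≤ F a := by
    intro a ha
    have ha0 : 0 < a := lt_of_lt_of_le one_pos ((le_max_right _ _).trans ha)
    have haB : B ≤ a := (le_max_left _ _).trans ha
    calc (1 - ρ) ^ 2 * C = ∫ _, (1 - ρ) ^ 2 ∂μ := by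
          rw [integral_const, smul_eq_mul, mul_comm, measureReal_def]
    _ ≤ F a := by
          refine integral_mono_ae (integrable_const _) (hInt a ha0) ?_
          refine (ae_restrict_mem measurableSet_Ioc).mono fun t ht => ?_
          have ht0 : 0 < t := ht.1
          have hs : t ≤ Real.sqrt (a * t) := by
            have h1 : Real.sqrt (t * t) ≤ Real.sqrt (a * t) :=
              Real.sqrt_le_sqrt (by nlinarith [ht.2, haB, ht0])
            rwa [Real.sqrt_mul_self ht0.le] at h1
          have hspos : 0 < Real.sqrt (a * t) := lt_of_lt_of_le ht0 hs
          have hr : r a t ≤ ρ / Real.sqrt (a * t) :=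
            (hrbound a ha0 t ht0).trans (min_le_right _ _)
          have htr : t * r a t ≤ ρ := by
            calc t * r a t ≤ t * (ρ / Real.sqrt (a * t)) := by nlinarith
            _ = ρ * (t / Real.sqrt (a * t)) := by ring
            _ ≤ ρ * 1 := by
                refine mul_le_mul_of_nonneg_left ?_ hρ0.le
                exact div_le_one_of_le₀ hs hspos.le
            _ = ρ := mul_one ρ
          have h1 : (0:ℝ) ≤ 1 - ρ := by linarith
          have h2 : 1 - ρ ≤ 1 - t * r a t := by linarith
          exact pow_le_pow_left₀ h1 h2 2
  have h4 : Tendsto (fun a => a * ‖xa a - xdag‖ ^ 2) atTop atTop := by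
    have hk : 0 < (1 - ρ) ^ 2 * C := by
      have : (0:ℝ) < 1 - ρ := by linarith
      positivity
    refine tendsto_atTop_mono' atTop ?_ ((tendsto_id.atTop_mul_const hk))
    filter_upwards [eventually_ge_atTop (max B 1)] with a ha
    have ha0 : 0 < a := lt_of_lt_of_le one_pos ((le_max_right _ _).trans ha)
    rw [hFeq a ha0]
    exact mul_le_mul_of_nonneg_left (hFlow a ha) ha0.le
  refine ⟨hcont, hmono, h3, h4, ?_⟩
  intro δ hδ
  have hδ2 : 0 < δ ^ 2 := by positivity
  obtain ⟨ε, hεlt, hε0⟩ :=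
    ((h3.eventually_lt_const hδ2).and self_mem_nhdsWithin).exists
  have hε0' : (0:ℝ) < ε := hε0
  obtain ⟨M, hM1, hM2⟩ :=
    ((eventually_ge_atTop (max ε 1)).and (h4.eventually_gt_atTop (δ ^ 2))).exists
  have hεM : ε ≤ M := (le_max_left _ _).trans hM1
  have hM0 : 0 < M := lt_of_lt_of_le hε0' hεM
  have hsub : Set.Icc ε M ⊆ Set.Ioi (0:ℝ) := fun x hx => lt_of_lt_of_le hε0' hx.1
  have hmem : δ ^ 2 ∈ Set.Icc ((fun a => a * ‖xa a - xdag‖ ^ 2) ε)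
      ((fun a => a * ‖xa a - xdag‖ ^ 2) M) := ⟨hεlt.le, hM2.le⟩
  obtain ⟨a, haI, haeq⟩ := intermediate_value_Icc hεM (hcont.mono hsub) hmem
  have ha0 : 0 < a := lt_of_lt_of_le hε0' haI.1
  refine ⟨a, ⟨ha0, haeq⟩, ?_⟩
  rintro b ⟨hb0, hbeq⟩
  exact hmono.injOn (Set.mem_Ioi.2 hb0) (Set.mem_Ioi.2 ha0) (hbeq.trans haeq.symm)
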